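/- Let α₁,…,α_r be real numbers with 1, α₁,…,α_r linearly independent over ℚ, with the best-approximation sequence (m_ν) and quantities ζ_ν, M_ν. Suppose that for every ν the r+1 consecutive best approximation vectors m_ν, m_{ν+1}, …, m_{ν+r} ∈ ℤ^{r+1} are linearly independent. Then for every ν one has ζ_ν ≥ 1/((r+1)!·M_{ν+r}^r). -/

import Mathlib

open Finset MeasureTheory

/-- The value of the linear form: `ζ(m) = m₀ + Σ mⱼ αⱼ`. -/
def zetaF {r : ℕ} (α : Fin r → ℝ) (m₀ : ℤ) (m : Fin r → ℤ) : ℝ :=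
  (m₀ : ℝ) + ∑ j, (m j : ℝ) * α j

/-- `M(m) = max_{1 ≤ j ≤ r} |m_j|` (as a natural number). -/
def Mnorm {r : ℕ} (m : Fin r → ℤ) : ℕ :=
  Finset.univ.sup fun j => (m j).natAbs

/-- `m = (m₀, m₁, …, m_r)` is a best approximation (in the sense of linear form)
for `α₁, …, α_r`. -/
def IsBestApprox {r : ℕ} (α : Fin r → ℝ) (m₀ : ℤ) (m : Fin r → ℤ) : Prop :=
  m ≠ 0 ∧ 0 < zetaF α m₀ m ∧
    ∀ (n₀ : ℤ) (n : Fin r → ℤ), n ≠ 0 → Mnorm n ≤ Mnorm m →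
      zetaF α m₀ m ≤ |zetaF α n₀ n|

/-- `(mz ν, m ν)` is the sequence of all best approximations, ordered by
strictly increasing `M_ν`. -/
def IsBASeq {r : ℕ} (α : Fin r → ℝ) (mz : ℕ → ℤ) (m : ℕ → Fin r → ℤ) : Prop :=
  (∀ ν, IsBestApprox α (mz ν) (m ν)) ∧
  StrictMono (fun ν => Mnorm (m ν)) ∧
  ∀ (p₀ : ℤ) (p : Fin r → ℤ), IsBestApprox α p₀ p → ∃ ν, p₀ = mz ν ∧ p = m ν

/-- `1, α₁, …, α_r` are linearly independent over `ℚ`. -/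
def LinIndepWithOne {r : ℕ} (α : Fin r → ℝ) : Prop :=
  LinearIndependent ℚ (Fin.cons (1 : ℝ) α : Fin (r + 1) → ℝ)

/-- `(α₁, …, α_r)` is a `ψ`-singular tuple (in the sense of linear form). -/
def IsPsiSingular {r : ℕ} (α : Fin r → ℝ) (ψ : ℝ → ℝ) : Prop :=
  ∀ T : ℝ, 1 < T → ∃ n : Fin r → ℤ, n ≠ 0 ∧ (∀ j, (|n j| : ℝ) ≤ T) ∧
    ∃ n₀ : ℤ, |zetaF α n₀ n| < ψ T

/-- if every `r+1` consecutive best approximations are linearly independent, then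
`ζ_ν ≥ 1 / ((r+1)! · M_{ν+r}^r)`. -/
theorem stmt4 (r : ℕ) (hr : 1 ≤ r) (α : Fin r → ℝ) (hα : LinIndepWithOne α)
    (mz : ℕ → ℤ) (m : ℕ → Fin r → ℤ) (hBA : IsBASeq α mz m)
    (hindep : ∀ ν, LinearIndependent ℚ
      fun i : Fin (r + 1) => (fun j => ((Fin.cons (mz (ν + i)) (m (ν + i)) : Fin (r+1) → ℤ) j : ℚ)))
    (ν : ℕ) :
    1 / ((r + 1).factorial * (Mnorm (m (ν + r)) : ℝ) ^ r) ≤ zetaF α (mz ν) (m ν) := by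
  classical
  obtain ⟨hba, hmono, -⟩ := hBA
  set ζ : ℕ → ℝ := fun k => zetaF α (mz k) (m k) with hζ
  set Mr : ℝ := (Mnorm (m (ν + r)) : ℝ) with hMr
  have hζpos : ∀ k, 0 < ζ k := fun k => (hba k).2.1
  have hζdec : ∀ k : ℕ, ζ (ν + k) ≤ ζ ν := by
    intro k
    have h := (hba (ν + k)).2.2 (mz ν) (m ν) (hba ν).1
      (hmono.monotone (Nat.le_add_right ν k))
    rwa [abs_of_pos (hζpos ν)] at h
  have hMr0 : 0 ≤ Mr := Nat.cast_nonneg _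
  have hMr1 : (1 : ℝ) ≤ Mr := by
    have hne := (hba (ν + r)).1
    obtain ⟨j, hj⟩ := Function.ne_iff.mp hne
    have : 1 ≤ (m (ν + r) j).natAbs := by
      have : m (ν + r) j ≠ 0 := hj
      omega
    have : 1 ≤ Mnorm (m (ν + r)) :=
      le_trans this (Finset.le_sup (f := fun j => (m (ν + r) j).natAbs) (Finset.mem_univ j))
    rw [hMr]
    exact_mod_cast this
  have hMbound : ∀ (i : Fin (r + 1)) (j : Fin r), |((m (ν + i) j : ℤ) : ℝ)| ≤ Mr := by
    intro i j
    have h1 : (m (ν + i) j).natAbs ≤ Mnorm (m (ν + i)) :=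
      Finset.le_sup (f := fun j => (m (ν + (i:ℕ)) j).natAbs) (Finset.mem_univ j)
    have h2 : Mnorm (m (ν + i)) ≤ Mnorm (m (ν + r)) := by
      have : (ν + (i : ℕ)) ≤ ν + r := by
        have := i.is_le
        omega
      exact hmono.monotone this
    have : (m (ν + i) j).natAbs ≤ Mnorm (m (ν + r)) := le_trans h1 h2
    rw [hMr, ← Int.cast_abs]
    have habs : |m (ν + (i:ℕ)) j| ≤ (Mnorm (m (ν + r)) : ℤ) := by
      rw [Int.abs_eq_natAbs]
      exact_mod_cast this
    exact_mod_cast habs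
  -- the integer matrix of r+1 consecutive best approximations
  set A : Matrix (Fin (r + 1)) (Fin (r + 1)) ℤ :=
    fun i j => (Fin.cons (mz (ν + i)) (m (ν + i)) : Fin (r + 1) → ℤ) j with hA
  -- its determinant is a nonzero integer
  have hdetA : A.det ≠ 0 := by
    have hli : LinearIndependent ℚ (fun i => (A.map (Int.cast : ℤ → ℚ)) i) := by
      have := hindep ν
      convert this using 2
      rfl
    have hunit : IsUnit (A.map (Int.cast : ℤ → ℚ)) :=
      Matrix.linearIndependent_rows_iff_isUnit.mp hli
    have hdet : (A.map (Int.cast : ℤ → ℚ)).det ≠ 0 :=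
      IsUnit.ne_zero ((Matrix.isUnit_iff_isUnit_det _).mp hunit)
    intro h
    apply hdet
    rw [show A.map (Int.cast : ℤ → ℚ) = (Int.castRingHom ℚ).mapMatrix A from rfl,
      ← RingHom.map_det, h]
    simp
  have hdetA1 : (1 : ℝ) ≤ |((A.det : ℤ) : ℝ)| := by
    rw [← Int.cast_abs]
    exact_mod_cast Int.one_le_abs hdetA
  -- the real matrices
  set Aℝ : Matrix (Fin (r + 1)) (Fin (r + 1)) ℝ := A.map (Int.cast : ℤ → ℝ) with hAR
  set C : Matrix (Fin (r + 1)) (Fin (r + 1)) ℝ :=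
    fun k l => if l = 0 then (Fin.cons 1 α : Fin (r + 1) → ℝ) k else if k = l then 1 else 0 with hC
  set B : Matrix (Fin (r + 1)) (Fin (r + 1)) ℝ := Aℝ * C with hB
  -- entries of B
  have hB0 : ∀ i, B i 0 = ζ (ν + i) := by
    intro i
    rw [hB, Matrix.mul_apply]
    simp only [hC, if_pos rfl]
    rw [Fin.sum_univ_succ]
    simp only [Fin.cons_zero, Fin.cons_succ]
    simp only [hAR, Matrix.map_apply]
    simp [hA, hζ, zetaF]
  have hBs : ∀ i (j : Fin r), B i j.succ = ((m (ν + i) j : ℤ) : ℝ) := by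
    intro i j
    rw [hB, Matrix.mul_apply]
    have : ∀ k : Fin (r + 1), Aℝ i k * C k j.succ = if k = j.succ then Aℝ i k else 0 := by
      intro k
      simp only [hC]
      rw [if_neg (Fin.succ_ne_zero j)]
      by_cases h : k = j.succ <;> simp [h]
    rw [Finset.sum_congr rfl fun k _ => this k, Finset.sum_ite_eq' Finset.univ j.succ]
    simp only [hAR, Matrix.map_apply]
    simp [hA]
  -- determinant of C is 1 (lower triangular with unit diagonal)
  have hdetC : C.det = 1 := by
    rw [Matrix.det_of_lowerTriangular C]
    · apply Finset.prod_eq_one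
      intro k _
      by_cases h : k = 0 <;> simp [hC, h]
    · intro k l hkl
      have hl0 : l ≠ 0 := by
        intro h
        rw [h] at hkl
        exact absurd (OrderDual.toDual_lt_toDual.mp hkl) (Fin.not_lt_zero k)
      have hkl' : k ≠ l := fun he => absurd hkl (by simp [he])
      simp [hC, hl0, hkl']
  have hdetB : B.det = ((A.det : ℤ) : ℝ) := by
    rw [hB, Matrix.det_mul, hdetC, mul_one, hAR,
      show A.map (Int.cast : ℤ → ℝ) = (Int.castRingHom ℝ).mapMatrix A from rfl,
      ← RingHom.map_det]
    rfl
  -- bound |det B|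
  have hbound : |B.det| ≤ ((r + 1).factorial : ℝ) * (ζ ν * Mr ^ r) := by
    rw [Matrix.det_apply]
    refine le_trans (Finset.abs_sum_le_sum_abs _ _) ?_
    have hterm : ∀ σ : Equiv.Perm (Fin (r + 1)),
        |Equiv.Perm.sign σ • ∏ i, B (σ i) i| ≤ ζ ν * Mr ^ r := by
      intro σ
      have habs : |Equiv.Perm.sign σ • ∏ i, B (σ i) i| = |∏ i, B (σ i) i| := by
        rcases Int.units_eq_one_or (Equiv.Perm.sign σ) with h | h <;>
          simp [h, Units.smul_def]
      rw [habs, abs_prod, Fin.prod_univ_succ]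
      have h0 : |B (σ 0) 0| ≤ ζ ν := by
        rw [hB0, abs_of_pos (hζpos _)]
        exact hζdec _
      have hrest : (∏ j : Fin r, |B (σ j.succ) j.succ|) ≤ Mr ^ r := by
        calc (∏ j : Fin r, |B (σ j.succ) j.succ|) ≤ ∏ _j : Fin r, Mr := by
              apply Finset.prod_le_prod
              · intro j _; exact abs_nonneg _
              · intro j _
                rw [hBs]
                exact hMbound _ _
          _ = Mr ^ r := by simp
      exact mul_le_mul h0 hrest (Finset.prod_nonneg fun j _ => abs_nonneg _)
        (le_of_lt (hζpos ν))
    refine le_trans (Finset.sum_le_sum fun σ _ => hterm σ) ?_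
    rw [Finset.sum_const, Finset.card_univ, Fintype.card_perm, Fintype.card_fin,
      nsmul_eq_mul]
  -- put everything together
  have hkey : (1 : ℝ) ≤ ((r + 1).factorial : ℝ) * (ζ ν * Mr ^ r) := by
    calc (1 : ℝ) ≤ |((A.det : ℤ) : ℝ)| := hdetA1
      _ = |B.det| := by rw [hdetB]
      _ ≤ _ := hbound
  have hD : (0 : ℝ) < ((r + 1).factorial : ℝ) * Mr ^ r := by
    apply mul_pos
    · exact_mod_cast Nat.factorial_pos (r + 1)
    · exact pow_pos (lt_of_lt_of_le one_pos hMr1) r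
  rw [div_le_iff₀ hD]
  calc (1 : ℝ) ≤ ((r + 1).factorial : ℝ) * (ζ ν * Mr ^ r) := hkey
    _ = ζ ν * (((r + 1).factorial : ℝ) * Mr ^ r) := by ring
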